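/- If a ring R is inner McCoy and n ≥ 2, then DUT_2(R) (2×2 upper triangular matrices with equal diagonal entries) is inner McCoy. -/

import Mathlib

def IsInnerMcCoy (S : Type*) [Ring S] : Prop :=
  ∀ f g : Polynomial S, f ≠ 0 → g ≠ 0 → f * g * f = 0 →
    ∃ r : S, r ≠ 0 ∧ f * Polynomial.C r * f = 0

/-- The subring of upper triangular `n × n` matrices over `R` with constant diagonal. -/
def DUT (R : Type*) [Ring R] (n : ℕ) : Subring (Matrix (Fin n) (Fin n) R) where
  carrier := {M | (∀ i j : Fin n, j < i → M i j = 0) ∧ ∀ i j : Fin n, M i i = M j j}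
  zero_mem' := ⟨fun _ _ _ => rfl, fun _ _ => rfl⟩
  one_mem' := ⟨fun _ _ h => Matrix.one_apply_ne (ne_of_lt h).symm,
    fun i j => by rw [Matrix.one_apply_eq, Matrix.one_apply_eq]⟩
  add_mem' := by
    rintro A B ⟨hA1, hA2⟩ ⟨hB1, hB2⟩
    refine ⟨fun i j hij => by simp [Matrix.add_apply, hA1 i j hij, hB1 i j hij],
      fun i j => by simp [Matrix.add_apply, hA2 i j, hB2 i j]⟩
  neg_mem' := by
    rintro A ⟨hA1, hA2⟩
    exact ⟨fun i j hij => by simp [Matrix.neg_apply, hA1 i j hij],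
      fun i j => by simp [Matrix.neg_apply, hA2 i j]⟩
  mul_mem' := by
    rintro A B ⟨hA1, hA2⟩ ⟨hB1, hB2⟩
    constructor
    · intro i j hij
      rw [Matrix.mul_apply]
      apply Finset.sum_eq_zero
      intro k _
      rcases lt_or_ge k i with hk | hk
      · rw [hA1 i k hk, zero_mul]
      · rw [hB1 k j (lt_of_lt_of_le hij hk), mul_zero]
    · intro i j
      have key : ∀ m : Fin n, (A * B) m m = A m m * B m m := by
        intro m
        rw [Matrix.mul_apply]
        apply Finset.sum_eq_single
        · intro k _ hk
          rcases lt_or_gt_of_ne hk with h | h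
          · rw [hA1 m k h, zero_mul]
          · rw [hB1 k m h, mul_zero]
        · intro h
          exact absurd (Finset.mem_univ m) h
      rw [key i, key j, hA2 i j, hB2 i j]


namespace DUTAux
open Polynomial Matrix
variable {R : Type*} [Ring R]

theorem mem_dut (M : DUT R 2) : (∀ i j : Fin 2, j < i → M.val i j = 0) ∧
    ∀ i j : Fin 2, M.val i i = M.val j j := M.2

/-- diagonal entry ring hom -/
def dphi : DUT R 2 →+* R where
  toFun M := M.val 0 0
  map_one' := Matrix.one_apply_eq 0
  map_mul' A B := by
    show (A.val * B.val) 0 0 = _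
    rw [Matrix.mul_apply, Fin.sum_univ_two, (mem_dut B).1 1 0 (by norm_num), mul_zero, add_zero]
  map_zero' := rfl
  map_add' A B := rfl

/-- scalar matrix ring hom -/
def diota : R →+* DUT R 2 where
  toFun r := ⟨Matrix.scalar (Fin 2) r, by
    constructor
    · intro i j hij
      simp [Matrix.diagonal_apply_ne _ (ne_of_lt hij).symm]
    · intro i j; simp⟩
  map_one' := Subtype.ext (by simp)
  map_mul' a b := Subtype.ext (by
    show Matrix.scalar (Fin 2) (a*b) = Matrix.scalar (Fin 2) a * Matrix.scalar (Fin 2) b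
    simp)
  map_zero' := Subtype.ext (by simp)
  map_add' a b := Subtype.ext (by
    show Matrix.scalar (Fin 2) (a+b) = Matrix.scalar (Fin 2) a + Matrix.scalar (Fin 2) b
    simp)

def e : DUT R 2 := ⟨!![0,1;0,0], by
  constructor
  · intro i j hij; fin_cases i <;> fin_cases j <;> simp_all
  · intro i j; fin_cases i <;> fin_cases j <;> simp⟩

theorem dphi_diota (r : R) : dphi (diota r : DUT R 2) = r := by
  show (Matrix.scalar (Fin 2) r) 0 0 = r
  simp

theorem iota_e_val (r : R) : ((diota r * e : DUT R 2) : Matrix (Fin 2) (Fin 2) R) = !![0,r;0,0] := by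
  show (Matrix.scalar (Fin 2) r * e.val) = _
  ext i j
  fin_cases i <;> fin_cases j <;> simp [e, Matrix.mul_apply, Fin.sum_univ_two, Matrix.scalar]

theorem mul_e (M : DUT R 2) : M * e = diota (dphi M) * e := by
  apply Subtype.ext
  rw [iota_e_val]
  show M.val * e.val = _
  ext i j
  fin_cases i <;> fin_cases j <;>
    simp [e, dphi, Matrix.mul_apply, Fin.sum_univ_two, (mem_dut M).1 1 0 (by norm_num)] <;> rfl

theorem e_comm (M : DUT R 2) : e * M = M * e := by
  apply Subtype.ext
  show e.val * M.val = M.val * e.val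
  ext i j
  fin_cases i <;> fin_cases j <;>
    simp [e, Matrix.mul_apply, Fin.sum_univ_two, (mem_dut M).1 1 0 (by norm_num),
      (mem_dut M).2 1 0]

end DUTAux

namespace DUTAux
open Polynomial Matrix
variable {R : Type*} [Ring R]

noncomputable def kappa : DUT R 2 →+* DUT R 2 := diota.comp dphi

theorem mul_Ce (P : Polynomial (DUT R 2)) : P * C e = P.map kappa * C e := by
  refine Polynomial.ext fun n => ?_
  rw [coeff_mul_C, coeff_mul_C, coeff_map]
  exact mul_e _

theorem Ce_comm (P : Polynomial (DUT R 2)) : C e * P = P * C e := by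
  refine Polynomial.ext fun n => ?_
  rw [coeff_C_mul, coeff_mul_C, e_comm]

theorem key (F : Polynomial (DUT R 2)) (r : R) :
    F * C (diota r * e) * F =
      ((F.map dphi * C r * F.map dphi).map diota) * C e := by
  rw [C_mul, ← mul_assoc, mul_assoc _ (C e) F, Ce_comm, ← mul_assoc, mul_Ce]
  rw [Polynomial.map_mul, Polynomial.map_mul, map_C]
  rw [Polynomial.map_mul, Polynomial.map_mul, map_C]
  have h1 : (F.map dphi).map diota = F.map kappa := (Polynomial.map_map dphi diota F)
  have h2 : kappa (diota r) = diota r := by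
    show diota (dphi (diota r)) = diota r
    rw [dphi_diota]
  rw [h1, h2]

theorem inj_aux (q : Polynomial R) (hq : (q.map diota) * C e = 0) : q = 0 := by
  ext n
  have h1 : (diota (q.coeff n) * e : DUT R 2) = 0 := by
    have := congrArg (fun P => Polynomial.coeff P n) hq
    simpa [coeff_mul_C, coeff_map] using this
  have h3 : ((diota (q.coeff n) * e : DUT R 2) : Matrix (Fin 2) (Fin 2) R) = !![0, q.coeff n; 0, 0] :=
    iota_e_val _
  rw [h1] at h3
  have := congrArg (fun M : Matrix (Fin 2) (Fin 2) R => M 0 1) h3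
  simpa using this.symm

theorem coeff_eq (M : DUT R 2) (h0 : dphi M = 0) :
    M = diota (M.val 0 1) * e := by
  apply Subtype.ext
  rw [iota_e_val]
  ext i j
  fin_cases i <;> fin_cases j <;>
    simp [(mem_dut M).1 1 0 (by norm_num), (mem_dut M).2 1 0, show M.val 0 0 = 0 from h0]

end DUTAux

open Polynomial DUTAux

/-- If `R` is inner McCoy (and `n ≥ 2`), then `DUT₂(R)` is inner McCoy. -/
theorem dut2_innerMcCoy (R : Type*) [Ring R] (n : ℕ) (hn : 2 ≤ n) (h : IsInnerMcCoy R) :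
    IsInnerMcCoy (DUT R 2) := by
  classical
  intro F G hF hG hFGF
  by_cases h10 : (1 : R) = 0
  · exfalso
    apply hF
    have hall : ∀ M : DUT R 2, M = 0 := by
      intro M
      apply Subtype.ext
      ext i j
      show M.val i j = 0
      calc M.val i j = M.val i j * 1 := (mul_one _).symm
        _ = 0 := by rw [h10, mul_zero]
    exact Polynomial.ext fun m => by rw [hall (F.coeff m), coeff_zero]
  set f := F.map dphi with hf
  set g := G.map dphi with hg
  have hfgf : f * g * f = 0 := by
    have := congrArg (Polynomial.map dphi) hFGF
    simpa [Polynomial.map_mul] using this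
  by_cases hf0 : f = 0
  · refine ⟨e, ?_, ?_⟩
    · intro he
      have := congrArg (fun M : DUT R 2 => M.val 0 1) he
      exact h10 (by simpa [e] using this)
    · have hk := key F 1
      rw [map_one, one_mul] at hk
      rw [hk, ← hf, hf0]
      simp
  · obtain ⟨q, hq, hfqf⟩ : ∃ q : Polynomial R, q ≠ 0 ∧ f * q * f = 0 := by
      by_cases hg0 : g = 0
      · -- strict upper part of G
        set g' : Polynomial R := ⟨AddMonoidAlgebra.ofCoeff (G.toFinsupp.coeff.mapRange (fun M => M.val 0 1) rfl)⟩ with hg'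
        have hcoeff : ∀ m, g'.coeff m = (G.coeff m).val 0 1 := fun m => rfl
        have hGeq : G = g'.map diota * C e := by
          refine Polynomial.ext fun m => ?_
          rw [coeff_mul_C, coeff_map, hcoeff]
          refine coeff_eq (G.coeff m) ?_
          have := congrArg (fun P => Polynomial.coeff P m) hg0
          simpa [hg] using this
        have hk2 : (g'.map diota).map kappa = g'.map diota := by
          rw [Polynomial.map_map,
            show kappa.comp diota = (diota : R →+* DUT R 2) from
              RingHom.ext fun r => by simp [kappa, dphi_diota]]
        have hk1 : F.map kappa = f.map diota := by
          rw [hf, Polynomial.map_map]; rfl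
        have step : F * G * F = (f * g' * f).map diota * C e := by
          rw [hGeq, ← mul_assoc F (g'.map diota) (C e),
            mul_assoc (F * g'.map diota) (C e) F, Ce_comm, ← mul_assoc,
            mul_Ce (F * g'.map diota * F)]
          simp only [Polynomial.map_mul]
          rw [hk1, hk2]
        refine ⟨g', ?_, ?_⟩
        · intro hg'0
          apply hG
          rw [hGeq, hg'0]
          simp
        · refine inj_aux _ ?_
          rw [← step]
          exact hFGF
      · exact ⟨g, hg0, hfgf⟩
    obtain ⟨r, hr, hr0⟩ := h f q hf0 hq hfqf
    refine ⟨diota r * e, ?_, ?_⟩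
    · intro hre
      apply hr
      have hv := iota_e_val (R := R) r
      rw [hre] at hv
      have := congrArg (fun M : Matrix (Fin 2) (Fin 2) R => M 0 1) hv
      simpa using this.symm
    · rw [key, ← hf, hr0]
      simp
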